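/- Let M ⊆ N ⊆ A^p be A-submodules. If M_D has finite colength in N_D (i.e. the B-module N_D/M_D has finite length), then M has finite colength in N, i.e. N/M has finite length as an A-module. -/
import Mathlib


/-- The double of a tuple of functions: `h_D := (h ∘ π₁, h ∘ π₂)`. -/
def double {k X ι : Type} (h : ι → X → k) :
    (ι → X × X → k) × (ι → X × X → k) :=
  (fun i => h i ∘ Prod.fst, fun i => h i ∘ Prod.snd)

/-- The double of a submodule `M ⊆ A^ι`: the `B`-submodule of `B^{2ι}`
generated by the doubles of elements of `M`, where `A = X → k`, `B = X × X → k`. -/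
def doubleSub {k X ι : Type} [CommRing k] (M : Submodule (X → k) (ι → X → k)) :
    Submodule (X × X → k) ((ι → X × X → k) × (ι → X × X → k)) :=
  Submodule.span (X × X → k) (double '' (M : Set (ι → X → k)))

lemma mem_doubleSub {k X ι : Type} [CommRing k] {M : Submodule (X → k) (ι → X → k)}
    {h : ι → X → k} (hm : h ∈ M) : double h ∈ doubleSub M :=
  Submodule.subset_span ⟨h, hm, rfl⟩

/-- Module length as the supremum of lengths of strictly ascending chains of submodules. -/
noncomputable def moduleLength (R M : Type) [CommRing R] [AddCommGroup M] [Module R M] :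
    WithBot ℕ∞ :=
  Order.krullDim (Submodule R M)

/-- Restriction to the diagonal, as a ring hom `B →+* A`. -/
def diagHom (k X : Type) [CommRing k] : (X × X → k) →+* (X → k) where
  toFun g x := g (x, x)
  map_one' := rfl
  map_mul' _ _ := rfl
  map_zero' := rfl
  map_add' _ _ := rfl

/-- First-component diagonal restriction, semilinear over `diagHom`. -/
def diagMap (k X ι : Type) [CommRing k] :
    ((ι → X × X → k) × (ι → X × X → k)) →ₛₗ[diagHom k X] (ι → X → k) where
  toFun v := fun i x => v.1 i (x, x)
  map_add' _ _ := rfl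
  map_smul' _ _ := rfl

lemma mem_of_double_mem {k X ι : Type} [CommRing k] {M : Submodule (X → k) (ι → X → k)}
    {h : ι → X → k} (hd : double h ∈ doubleSub M) : h ∈ M := by
  have hle : doubleSub M ≤ Submodule.comap (diagMap k X ι) M := by
    rw [doubleSub, Submodule.span_le]
    rintro _ ⟨g, hg, rfl⟩
    exact hg
  exact hle hd

lemma doubleSub_mono {k X ι : Type} [CommRing k] {P Q : Submodule (X → k) (ι → X → k)}
    (h : P ≤ Q) : doubleSub P ≤ doubleSub Q :=
  Submodule.span_mono (Set.image_mono h)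

lemma doubleSub_strictMono {k X ι : Type} [CommRing k]
    {P Q : Submodule (X → k) (ι → X → k)} (h : P < Q) : doubleSub P < doubleSub Q := by
  refine lt_of_le_of_ne (doubleSub_mono h.le) fun heq => h.ne ?_
  refine le_antisymm h.le fun x hx => ?_
  exact mem_of_double_mem (heq ▸ mem_doubleSub hx)

theorem finite_colength_of_double_finite_colength {k X : Type} [CommRing k] {p : ℕ}
    (M N : Submodule (X → k) (Fin p → X → k)) (hMN : M ≤ N)
    (hfin : moduleLength (X × X → k)
        (↥(doubleSub N) ⧸ Submodule.comap (doubleSub N).subtype (doubleSub M)) ≠ ⊤) :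
    moduleLength (X → k) (↥N ⧸ Submodule.comap N.subtype M) ≠ ⊤ := by
  set A := X → k
  set B := X × X → k
  set K : Submodule A ↥N := Submodule.comap N.subtype M with hK
  set KD : Submodule B ↥(doubleSub N) :=
    Submodule.comap (doubleSub N).subtype (doubleSub M) with hKD
  -- The strictly monotone map between lattices of submodules.
  set F : Submodule A (↥N ⧸ K) → Submodule B (↥(doubleSub N) ⧸ KD) :=
    fun S => Submodule.map KD.mkQ (Submodule.comap (doubleSub N).subtype
      (doubleSub (Submodule.map N.subtype (Submodule.comap K.mkQ S)))) with hF
  have hstrict : StrictMono F := by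
    intro S T hST
    -- step 1: comap along mkQ
    have h1 : Submodule.comap K.mkQ S < Submodule.comap K.mkQ T := by
      refine lt_of_le_of_ne (Submodule.comap_mono hST.le) fun heq => hST.ne ?_
      have := congrArg (Submodule.map K.mkQ) heq
      rwa [Submodule.map_comap_eq_of_surjective K.mkQ_surjective,
        Submodule.map_comap_eq_of_surjective K.mkQ_surjective] at this
    -- step 2: map along subtype
    have h2 : Submodule.map N.subtype (Submodule.comap K.mkQ S)
        < Submodule.map N.subtype (Submodule.comap K.mkQ T) := by
      refine lt_of_le_of_ne (Submodule.map_mono h1.le) fun heq => h1.ne ?_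
      have := congrArg (Submodule.comap N.subtype) heq
      rwa [Submodule.comap_map_eq_of_injective N.injective_subtype,
        Submodule.comap_map_eq_of_injective N.injective_subtype] at this
    -- step 3: doubleSub
    have h3 := doubleSub_strictMono h2
    -- containments
    have hPN : Submodule.map N.subtype (Submodule.comap K.mkQ S) ≤ N :=
      Submodule.map_subtype_le _ _
    have hQN : Submodule.map N.subtype (Submodule.comap K.mkQ T) ≤ N :=
      Submodule.map_subtype_le _ _
    have hMP : M ≤ Submodule.map N.subtype (Submodule.comap K.mkQ S) := by
      have hKle : K ≤ Submodule.comap K.mkQ S := by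
        intro x hx
        have : K.mkQ x = 0 := by
          rwa [← LinearMap.mem_ker, Submodule.ker_mkQ]
        simp [Submodule.mem_comap, this]
      calc M = M ⊓ N := (inf_of_le_left hMN).symm
        _ = Submodule.map N.subtype K := by rw [hK, Submodule.map_comap_subtype, inf_comm]
        _ ≤ _ := Submodule.map_mono hKle
    -- step 4: comap along (doubleSub N).subtype
    have h4 : Submodule.comap (doubleSub N).subtype
          (doubleSub (Submodule.map N.subtype (Submodule.comap K.mkQ S)))
        < Submodule.comap (doubleSub N).subtype
          (doubleSub (Submodule.map N.subtype (Submodule.comap K.mkQ T))) := by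
      refine lt_of_le_of_ne (Submodule.comap_mono h3.le) fun heq => h3.ne ?_
      have := congrArg (Submodule.map (doubleSub N).subtype) heq
      rwa [Submodule.map_comap_subtype, Submodule.map_comap_subtype,
        inf_of_le_right (doubleSub_mono hPN), inf_of_le_right (doubleSub_mono hQN)] at this
    -- step 5: map along mkQ of KD
    have hKDle : KD ≤ Submodule.comap (doubleSub N).subtype
        (doubleSub (Submodule.map N.subtype (Submodule.comap K.mkQ S))) := by
      rw [hKD]
      exact Submodule.comap_mono (doubleSub_mono hMP)
    have hKDle' : KD ≤ Submodule.comap (doubleSub N).subtype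
        (doubleSub (Submodule.map N.subtype (Submodule.comap K.mkQ T))) :=
      hKDle.trans h4.le
    refine lt_of_le_of_ne (Submodule.map_mono h4.le) fun heq => h4.ne ?_
    have := congrArg (Submodule.comap KD.mkQ) heq
    rwa [Submodule.comap_map_eq, Submodule.comap_map_eq, Submodule.ker_mkQ,
      sup_of_le_left hKDle, sup_of_le_left hKDle'] at this
  have hle := Order.krullDim_le_of_strictMono F hstrict
  intro htop
  rw [moduleLength] at htop hfin
  exact hfin (top_le_iff.mp (htop ▸ hle))
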